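/- Let L be a frame and U ⊆ LC(L) a nonempty upper set. Define φ(V) = {(a,b) ∈ LC(L) | c(a) ∩ o(b) ⊆ V} for V ∈ S_b(L), and ψ(U) = ⋁_{(c,d)∈U} c(c) ∩ o(d). Then φ(ψ(U)) = U if and only if U is an admissible upper set of LC(L). -/

import Mathlib

open Set

variable {L : Type*} [Order.Frame L]

/-- The open sublocale determined by `a`. -/
def Opn (a : L) : Set L := Set.range (a ⇨ ·)

/-- A sublocale: a subset closed under all meets and under `a ⇨ (-)`. -/
def IsSublocale (S : Set L) : Prop :=
  (∀ T ⊆ S, sInf T ∈ S) ∧ ∀ a : L, ∀ s ∈ S, a ⇨ s ∈ S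

/-- Join of two sublocales in the coframe of sublocales. -/
def SJoin2 (S T : Set L) : Set L := {x | ∃ M ⊆ S ∪ T, sInf M = x}

/-- The supplement (co-pseudocomplement) of a sublocale: the least sublocale `T`
with `S ∨ T = L`. -/
def Supp (S : Set L) : Set L := ⋂₀ {T | IsSublocale T ∧ SJoin2 S T = Set.univ}

/-- The frame surjection onto a sublocale. -/
def nu (T : Set L) (a : L) : L := sInf {t ∈ T | a ≤ t}

/-- Canonical representations of locally closed sublocales. -/
def LCset (L : Type*) [Order.Frame L] : Set (L × L) :=
  {p | p.1 ≤ p.2 ∧ p.2 ⇨ p.1 = p.1}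

/-- The canonical-representation map `lc`. -/
def lc (p : L × L) : L × L := (p.2 ⇨ p.1, (p.2 ⇨ p.1) ⊔ p.2)

/-- The order on `LCset L`: `(x,y) ⊑ (a,b)` iff `x ≤ a` and `b ≤ a ∨ y`. -/
def LCle (p q : L × L) : Prop := p.1 ≤ q.1 ∧ q.2 ≤ q.1 ⊔ p.2

/-- The join in `LCset L`. -/
def lcSup (p q : L × L) : L × L := lc (p.1 ⊔ q.1, p.2 ⊓ q.2)

/-- The join in the coframe of sublocales of a family of locally closed sublocales. -/
def SJoinP (U : Set (L × L)) : Set L :=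
  {x | ∃ M ⊆ ⋃ p ∈ U, Set.Ici p.1 ∩ Opn p.2, sInf M = x}

/-- `m` is the greatest lower bound of `F` in the poset `(LCset L, LCle)`. -/
def lcIsGLB (F : Set (L × L)) (m : L × L) : Prop :=
  m ∈ LCset L ∧ (∀ p ∈ F, LCle m p) ∧
    ∀ q ∈ LCset L, (∀ p ∈ F, LCle q p) → LCle q m

/-- `F` is an admissible family in the join-semilattice `LCset L`, with meet `m`:
the meet exists and distributes over binary joins. -/
def lcAdmissible (F : Set (L × L)) (m : L × L) : Prop :=
  lcIsGLB F m ∧ ∀ b ∈ LCset L, lcIsGLB ((fun p => lcSup b p) '' F) (lcSup b m)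

def nn (p : L × L) (x : L) : L := p.2 ⇨ (p.1 ⊔ x)

lemma le_nn (p : L × L) (x : L) : x ≤ nn p x :=
  le_himp_iff.2 (inf_le_left.trans le_sup_right)

lemma fst_le_nn (p : L × L) (x : L) : p.1 ≤ nn p x :=
  le_himp_iff.2 (inf_le_left.trans le_sup_left)

lemma nn_nn (p : L × L) (x : L) : nn p (nn p x) = nn p x := by
  show p.2 ⇨ (p.1 ⊔ nn p x) = nn p x
  rw [sup_eq_right.2 (fst_le_nn p x)]
  show p.2 ⇨ (p.2 ⇨ (p.1 ⊔ x)) = p.2 ⇨ (p.1 ⊔ x)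
  rw [himp_himp, inf_idem]

lemma nn_eq_iff (p : L × L) (x : L) : nn p x = x ↔ p.1 ≤ x ∧ p.2 ⇨ x = x := by
  constructor
  · intro h
    have h1 : p.1 ≤ x := h ▸ fst_le_nn p x
    refine ⟨h1, le_antisymm ?_ le_himp⟩
    calc p.2 ⇨ x ≤ p.2 ⇨ (p.1 ⊔ x) := himp_le_himp_left le_sup_right
      _ = x := h
  · rintro ⟨h1, h2⟩
    show p.2 ⇨ (p.1 ⊔ x) = x
    rw [sup_eq_right.2 h1, h2]

lemma mem_Opn_iff (b x : L) : x ∈ Opn b ↔ b ⇨ x = x := by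
  constructor
  · rintro ⟨z, rfl⟩
    show b ⇨ (b ⇨ z) = b ⇨ z
    rw [himp_himp, inf_idem]
  · intro h
    exact ⟨x, h⟩

lemma mem_IciOpn_iff (p : L × L) (x : L) :
    x ∈ Set.Ici p.1 ∩ Opn p.2 ↔ nn p x = x := by
  rw [Set.mem_inter_iff, Set.mem_Ici, mem_Opn_iff, nn_eq_iff]

lemma lc_mem_LCset (p : L × L) : lc p ∈ LCset L := by
  refine ⟨le_sup_left, ?_⟩
  show ((p.2 ⇨ p.1) ⊔ p.2) ⇨ (p.2 ⇨ p.1) = p.2 ⇨ p.1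
  rw [sup_himp_distrib, himp_self, top_inf_eq, himp_himp, inf_idem]

lemma nn_lc (c d x : L) : nn (lc (c, d)) x = d ⇨ (c ⊔ x) := by
  show ((d ⇨ c) ⊔ d) ⇨ ((d ⇨ c) ⊔ x) = d ⇨ (c ⊔ x)
  rw [sup_himp_distrib, himp_eq_top_iff.2 le_sup_left, top_inf_eq]
  apply le_antisymm
  · rw [le_himp_iff]
    calc (d ⇨ ((d ⇨ c) ⊔ x)) ⊓ d ≤ ((d ⇨ c) ⊔ x) ⊓ d :=
          inf_le_inf_right d (le_refl _) |>.trans (le_inf (le_himp_iff.1 le_rfl) inf_le_right)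
      _ = ((d ⇨ c) ⊓ d) ⊔ (x ⊓ d) := inf_sup_right _ _ _
      _ ≤ c ⊔ x := sup_le ((le_himp_iff.1 le_rfl).trans le_sup_left) (inf_le_left.trans le_sup_right)
  · exact himp_le_himp_left (sup_le_sup_right le_himp x)

lemma nn_lcSup (p q : L × L) (x : L) :
    nn (lcSup p q) x = (p.2 ⊓ q.2) ⇨ ((p.1 ⊔ q.1) ⊔ x) := nn_lc _ _ _

lemma himp_inf_eq_self_iff (a b x : L) : (a ⊓ b) ⇨ x = x ↔ a ⇨ x = x ∧ b ⇨ x = x := by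
  constructor
  · intro h
    constructor
    · conv_lhs => rw [← h]
      rw [himp_himp, ← inf_assoc, inf_idem, h]
    · conv_lhs => rw [← h]
      rw [himp_himp, inf_comm b, inf_assoc, inf_idem, h]
  · rintro ⟨h1, h2⟩
    rw [← himp_himp, h2, h1]

lemma nn_lcSup_eq_iff (p q : L × L) (x : L) :
    nn (lcSup p q) x = x ↔ nn p x = x ∧ nn q x = x := by
  rw [nn_lcSup]
  have : (p.2 ⊓ q.2) ⇨ ((p.1 ⊔ q.1) ⊔ x) = nn (p.1 ⊔ q.1, p.2 ⊓ q.2) x := rfl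
  rw [this, nn_eq_iff, nn_eq_iff, nn_eq_iff]
  show p.1 ⊔ q.1 ≤ x ∧ (p.2 ⊓ q.2) ⇨ x = x ↔ _
  rw [sup_le_iff, himp_inf_eq_self_iff]
  tauto

lemma nn_le_of_LCle {p q : L × L} (h : LCle p q) (x : L) : nn p x ≤ nn q x := by
  show nn p x ≤ q.2 ⇨ (q.1 ⊔ x)
  rw [le_himp_iff]
  calc nn p x ⊓ q.2 ≤ nn p x ⊓ (q.1 ⊔ p.2) := inf_le_inf_left _ h.2
    _ = (nn p x ⊓ q.1) ⊔ (nn p x ⊓ p.2) := inf_sup_left _ _ _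
    _ ≤ q.1 ⊔ (p.1 ⊔ x) := sup_le_sup inf_le_right (le_himp_iff.1 le_rfl)
    _ ≤ q.1 ⊔ x := sup_le le_sup_left (sup_le (h.1.trans le_sup_left) le_sup_right)

lemma LCle_iff {p q : L × L} (hq : q.2 ⇨ q.1 = q.1) :
    LCle p q ↔ ∀ x, nn q x = x → nn p x = x := by
  constructor
  · intro h x hx
    exact le_antisymm ((nn_le_of_LCle h x).trans (le_of_eq hx)) (le_nn p x)
  · intro h
    constructor
    · have h1 := h (nn q ⊥) (nn_nn q ⊥)
      have h2 : p.1 ≤ nn q ⊥ := h1 ▸ fst_le_nn p (nn q ⊥)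
      have h3 : nn q ⊥ = q.1 := by show q.2 ⇨ (q.1 ⊔ ⊥) = q.1; rw [sup_bot_eq, hq]
      exact h3 ▸ h2
    · have h1 := h (nn q p.2) (nn_nn q p.2)
      have h2 : p.2 ≤ nn q p.2 := le_himp_iff.2 (inf_le_left.trans le_sup_right)
      have h3 : nn p (nn q p.2) = ⊤ :=
        top_le_iff.1 (le_himp_iff.2 (inf_le_right.trans (h2.trans le_sup_right)))
      have h4 : nn q p.2 = ⊤ := by rw [← h1, h3]
      have h5 : q.2 ⇨ (q.1 ⊔ p.2) = ⊤ := h4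
      exact himp_eq_top_iff.1 h5

lemma LCle_lcSup_left (p q : L × L) : LCle p (lcSup p q) := by
  constructor
  · exact le_himp_iff.2 (inf_le_left.trans le_sup_left)
  · exact sup_le le_sup_left (inf_le_left.trans le_sup_right)

lemma LCle_lcSup_right (p q : L × L) : LCle q (lcSup p q) := by
  constructor
  · exact le_himp_iff.2 (inf_le_left.trans le_sup_right)
  · exact sup_le le_sup_left (inf_le_right.trans le_sup_right)

lemma mem_SJoinP_iff (U : Set (L × L)) (x : L) :
    x ∈ SJoinP U ↔ sInf ((fun q => nn q x) '' U) = x := by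
  constructor
  · rintro ⟨M, hM, hMx⟩
    subst hMx
    set x := sInf M with hx
    apply le_antisymm
    · apply le_sInf
      intro t ht
      obtain ⟨q, hq, hq1, hq2⟩ : ∃ q ∈ U, q.1 ≤ t ∧ q.2 ⇨ t = t := by
        have := hM ht
        simp only [Set.mem_iUnion, Set.mem_inter_iff, Set.mem_Ici] at this
        obtain ⟨q, hqU, h1, h2⟩ := this
        exact ⟨q, hqU, h1, (mem_Opn_iff _ _).1 h2⟩
      refine sInf_le_of_le ⟨q, hq, rfl⟩ ?_
      calc nn q x ≤ q.2 ⇨ t := himp_le_himp_left (sup_le hq1 (sInf_le ht))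
        _ = t := hq2
    · exact le_sInf (by rintro t ⟨q, hq, rfl⟩; exact le_nn q x)
  · intro h
    refine ⟨(fun q => nn q x) '' U, ?_, h⟩
    rintro t ⟨q, hq, rfl⟩
    simp only [Set.mem_iUnion]
    exact ⟨q, hq, (mem_IciOpn_iff q (nn q x)).2 (nn_nn q x)⟩

theorem stmt_14 (U : Set (L × L)) (hU1 : U ⊆ LCset L) (hU2 : U.Nonempty)
    (hU3 : ∀ p ∈ U, ∀ q ∈ LCset L, LCle p q → q ∈ U) :
    {p | p ∈ LCset L ∧ Set.Ici p.1 ∩ Opn p.2 ⊆ SJoinP U} = U ↔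
      ∀ F ⊆ U, ∀ m, lcAdmissible F m → m ∈ U := by
  have hUsub : U ⊆ {p | p ∈ LCset L ∧ Set.Ici p.1 ∩ Opn p.2 ⊆ SJoinP U} := by
    intro p hp
    refine ⟨hU1 hp, fun x hx => ?_⟩
    refine ⟨{x}, ?_, sInf_singleton⟩
    rw [Set.singleton_subset_iff]
    exact Set.mem_biUnion hp hx
  constructor
  · -- forward: fixed point implies admissible-closed
    intro h F hFU m hm
    rw [← h]
    simp only [Set.mem_setOf_eq]
    refine ⟨hm.1.1, fun x hx => ?_⟩
    have hmx : nn m x = x := (mem_IciOpn_iff m x).1 hx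
    have hxT : ((x, (⊤ : L))) ∈ LCset L := ⟨le_top, top_himp⟩
    obtain ⟨-, -, hglb⟩ := hm.2 (x, ⊤) hxT
    have hyx : sInf ((fun p => nn p x) '' F) ≤ x := by
      have hlb : ∀ P ∈ (fun p => lcSup (x, ⊤) p) '' F,
          LCle (sInf ((fun p => nn p x) '' F), ⊤) P := by
        rintro _ ⟨p, hp, rfl⟩
        constructor
        · refine (sInf_le (Set.mem_image_of_mem _ hp)).trans ?_
          show nn p x ≤ ((x, (⊤ : L)).2 ⊓ p.2) ⇨ ((x, (⊤ : L)).1 ⊔ p.1)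
          rw [top_inf_eq, sup_comm]
          exact le_rfl
        · exact le_top.trans le_sup_right
      have hle := hglb (sInf ((fun p => nn p x) '' F), ⊤) ⟨le_top, top_himp⟩ hlb
      have h1 : (lcSup (x, ⊤) m).1 = x := by
        show ((x, (⊤ : L)).2 ⊓ m.2) ⇨ ((x, (⊤ : L)).1 ⊔ m.1) = x
        rw [top_inf_eq, sup_comm]
        exact hmx
      exact hle.1.trans h1.le
    rw [mem_SJoinP_iff]
    apply le_antisymm
    · exact (sInf_le_sInf (Set.image_mono hFU)).trans hyx
    · exact le_sInf (by rintro t ⟨q, hq, rfl⟩; exact le_nn q x)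
  · -- backward
    intro hcl
    apply Set.Subset.antisymm _ hUsub
    rintro ⟨a, b⟩ ⟨hab, H⟩
    have Hx : ∀ x, nn (a, b) x = x → sInf ((fun q => nn q x) '' U) = x := fun x hx =>
      (mem_SJoinP_iff U x).1 (H ((mem_IciOpn_iff (a, b) x).2 hx))
    have hFU : (fun q => lcSup (a, b) q) '' U ⊆ U := by
      rintro _ ⟨q, hq, rfl⟩
      exact hU3 q hq _ (lc_mem_LCset _) (LCle_lcSup_right (a, b) q)
    apply hcl _ hFU (a, b)
    have key : ∀ t : L × L, ∀ x, (∀ q ∈ U, b ⊓ nn t x ≤ nn q x) →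
        nn (a, b) x = x → nn t x = x := by
      intro t x h1 hx
      have hb : b ⇨ x = x := ((nn_eq_iff _ _).1 hx).2
      have h3 : b ⊓ nn t x ≤ x :=
        calc b ⊓ nn t x ≤ sInf ((fun q => nn q x) '' U) :=
              le_sInf (by rintro _ ⟨q, hq, rfl⟩; exact h1 q hq)
          _ = x := Hx x hx
      refine le_antisymm ?_ (le_nn t x)
      calc nn t x ≤ b ⇨ x := le_himp_iff.2 (by rw [inf_comm]; exact h3)
        _ = x := hb
    constructor
    · -- lcIsGLB F (a,b)
      refine ⟨hab, ?_, ?_⟩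
      · rintro _ ⟨q, hq, rfl⟩
        exact LCle_lcSup_left (a, b) q
      · intro t ht hlow
        rw [LCle_iff hab.2]
        intro x hx
        have ha : a ≤ x := ((nn_eq_iff _ _).1 hx).1
        refine key t x (fun q hq => ?_) hx
        have h2 : nn t x ≤ ((a, b).2 ⊓ q.2) ⇨ (((a, b).1 ⊔ q.1) ⊔ x) := by
          rw [← nn_lcSup]
          exact nn_le_of_LCle (hlow _ ⟨q, hq, rfl⟩) x
        show b ⊓ nn t x ≤ q.2 ⇨ (q.1 ⊔ x)
        rw [le_himp_iff]
        calc b ⊓ nn t x ⊓ q.2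
            ≤ (b ⊓ q.2) ⊓ ((b ⊓ q.2) ⇨ ((a ⊔ q.1) ⊔ x)) :=
              le_inf (le_inf (inf_le_left.trans inf_le_left) inf_le_right)
                ((inf_le_left.trans inf_le_right).trans h2)
          _ ≤ (a ⊔ q.1) ⊔ x := inf_himp_le
          _ ≤ q.1 ⊔ x := sup_le (sup_le (ha.trans le_sup_right) le_sup_left) le_sup_right
    · -- distributivity part
      intro e he
      refine ⟨lc_mem_LCset _, ?_, ?_⟩
      · rintro _ ⟨_, ⟨q, hq, rfl⟩, rfl⟩
        show LCle (lcSup e (a, b)) (lcSup e (lcSup (a, b) q))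
        have hcan : (lcSup e (lcSup (a, b) q)).2 ⇨ (lcSup e (lcSup (a, b) q)).1
            = (lcSup e (lcSup (a, b) q)).1 := (lc_mem_LCset _).2
        rw [LCle_iff hcan]
        intro x hx
        rw [nn_lcSup_eq_iff] at hx
        rw [nn_lcSup_eq_iff]
        exact ⟨hx.1, ((nn_lcSup_eq_iff _ _ _).1 hx.2).1⟩
      · intro t ht hlow
        have hcan : (lcSup e (a, b)).2 ⇨ (lcSup e (a, b)).1
            = (lcSup e (a, b)).1 := (lc_mem_LCset _).2
        rw [LCle_iff hcan]
        intro x hx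
        rw [nn_lcSup_eq_iff] at hx
        obtain ⟨hex, habx⟩ := hx
        have he1 : e.1 ≤ x := ((nn_eq_iff _ _).1 hex).1
        have he2 : e.2 ⇨ x = x := ((nn_eq_iff _ _).1 hex).2
        have ha : a ≤ x := ((nn_eq_iff _ _).1 habx).1
        have h1 : ∀ q ∈ U, b ⊓ (e.2 ⊓ nn t x) ≤ nn q x := by
          intro q hq
          have h2 : nn t x ≤
              (e.2 ⊓ (lcSup (a, b) q).2) ⇨ ((e.1 ⊔ (lcSup (a, b) q).1) ⊔ x) := by
            rw [← nn_lcSup]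
            exact nn_le_of_LCle (hlow _ ⟨_, ⟨q, hq, rfl⟩, rfl⟩) x
          have hbqP : b ⊓ q.2 ≤ (lcSup (a, b) q).2 := le_sup_right
          have hu1 : b ⊓ (e.2 ⊓ nn t x) ⊓ q.2 ≤ e.2 ⊓ (lcSup (a, b) q).2 :=
            le_inf (inf_le_left.trans (inf_le_right.trans inf_le_left))
              ((le_inf (inf_le_left.trans inf_le_left) inf_le_right).trans hbqP)
          show b ⊓ (e.2 ⊓ nn t x) ≤ q.2 ⇨ (q.1 ⊔ x)
          rw [le_himp_iff]
          calc b ⊓ (e.2 ⊓ nn t x) ⊓ q.2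
              ≤ ((e.1 ⊔ (lcSup (a, b) q).1) ⊔ x) ⊓ (b ⊓ q.2) := by
                refine le_inf ?_ (le_inf (inf_le_left.trans inf_le_left) inf_le_right)
                refine le_trans (le_inf hu1
                  ((inf_le_left.trans (inf_le_right.trans inf_le_right)).trans h2)) ?_
                exact inf_himp_le
            _ = ((e.1 ⊓ (b ⊓ q.2)) ⊔ ((lcSup (a, b) q).1 ⊓ (b ⊓ q.2))) ⊔ (x ⊓ (b ⊓ q.2)) := by
                rw [inf_sup_right, inf_sup_right]
            _ ≤ q.1 ⊔ x := by
                refine sup_le (sup_le ?_ ?_) (inf_le_left.trans le_sup_right)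
                · exact (inf_le_left.trans he1).trans le_sup_right
                · refine le_trans ?_ (sup_le (ha.trans le_sup_right) le_sup_left)
                  rw [inf_comm]
                  exact inf_himp_le
        have h3 : b ⊓ (e.2 ⊓ nn t x) ≤ x :=
          calc b ⊓ (e.2 ⊓ nn t x) ≤ sInf ((fun q => nn q x) '' U) :=
                le_sInf (by rintro _ ⟨q, hq, rfl⟩; exact h1 q hq)
            _ = x := Hx x habx
        have h4 : b ⊓ nn t x ≤ x := by
          have h5 : b ⊓ nn t x ≤ e.2 ⇨ x := by
            rw [le_himp_iff]
            refine le_trans ?_ h3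
            exact le_inf (inf_le_left.trans inf_le_left)
              (le_inf inf_le_right (inf_le_left.trans inf_le_right))
          exact h5.trans (le_of_eq he2)
        have hb : b ⇨ x = x := ((nn_eq_iff _ _).1 habx).2
        refine le_antisymm ?_ (le_nn t x)
        calc nn t x ≤ b ⇨ x := le_himp_iff.2 (by rw [inf_comm]; exact h4)
          _ = x := hb
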